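/- For all positive integers a, b, and p with p ≥ 2, there exists a positive integer n with n ≥ p such that every set A of permutations of {1,…,n} with |A| ≤ a satisfies d_p(A) ≥ b − 1. -/

import Mathlib

/-- `σ(≤P) = {s : σ s ≤ max_{j ∈ P} σ j}`. -/
def permLe {n : ℕ} (σ : Equiv.Perm (Fin n)) (P : Finset (Fin n)) : Finset (Fin n) :=
  Finset.univ.filter fun s => ∃ j ∈ P, σ s ≤ σ j

/-- The `P`-dependent set `⟨A;P⟩ = ⋂_{σ ∈ A} σ(≤P)`. -/
def depSet {n : ℕ} (A : Finset (Equiv.Perm (Fin n))) (P : Finset (Fin n)) : Finset (Fin n) :=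
  Finset.univ.filter fun s => ∀ σ ∈ A, ∃ j ∈ P, σ s ≤ σ j

/-- The `P`-dependency `d(A;P) = |⟨A;P⟩| - |P|`. -/
def dep {n : ℕ} (A : Finset (Equiv.Perm (Fin n))) (P : Finset (Fin n)) : ℕ :=
  (depSet A P).card - P.card

/-- The `p`-tuple dependency `d_p(A) = max {d(A;P) : |P| = p}`. -/
def tupleDep {n : ℕ} (A : Finset (Equiv.Perm (Fin n))) (p : ℕ) : ℕ :=
  (Finset.powersetCard p (Finset.univ : Finset (Fin n))).sup (dep A)

open Function Finset in
theorem my_erdos_szekeres {α : Type*} [LinearOrder α] {r s n : ℕ} {f : Fin n → α}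
    (hn : r * s < n) (hf : Injective f) :
    (∃ t : Finset (Fin n), r < #t ∧ StrictMonoOn f ↑t) ∨
      ∃ t : Finset (Fin n), s < #t ∧ StrictAntiOn f ↑t := by
  let inc_sequences_ending_in : Fin n → Finset (Finset (Fin n)) := fun i =>
    univ.powerset.filter fun t => Finset.max t = i ∧ StrictMonoOn f ↑t
  let dec_sequences_ending_in : Fin n → Finset (Finset (Fin n)) := fun i =>
    univ.powerset.filter fun t => Finset.max t = i ∧ StrictAntiOn f ↑t
  have inc_i : ∀ i, {i} ∈ inc_sequences_ending_in i := fun i => by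
    simp [inc_sequences_ending_in, StrictMonoOn]
  have dec_i : ∀ i, {i} ∈ dec_sequences_ending_in i := fun i => by
    simp [dec_sequences_ending_in, StrictAntiOn]
  let ab' : Fin n → ℕ × ℕ := by
    intro i
    apply
      (max' ((inc_sequences_ending_in i).image card) (Nonempty.image ⟨{i}, inc_i i⟩ _),
        max' ((dec_sequences_ending_in i).image card) (Nonempty.image ⟨{i}, dec_i i⟩ _))
  generalize hab : ab' = ab
  rsuffices ⟨i, hi⟩ : ∃ i, r < (ab i).1 ∨ s < (ab i).2
  · refine Or.imp ?_ ?_ hi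
    on_goal 1 =>
      have : (ab i).1 ∈ image card (inc_sequences_ending_in i) := by
        simp only [← hab]; exact max'_mem _ (Nonempty.image ⟨{i}, inc_i i⟩ _)
    on_goal 2 =>
      have : (ab i).2 ∈ image card (dec_sequences_ending_in i) := by
        simp only [← hab]; exact max'_mem _ (Nonempty.image ⟨{i}, dec_i i⟩ _)
    all_goals
      intro hi
      rw [mem_image] at this
      obtain ⟨t, ht₁, ht₂⟩ := this
      refine ⟨t, by rwa [ht₂], ?_⟩
      rw [mem_filter] at ht₁
      apply ht₁.2.2
  have : Injective ab := by
    simp only [← hab]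
    apply Injective.of_lt_imp_ne
    intro i j k q
    injection q with q₁ q₂
    cases lt_or_gt_of_ne fun _ => ne_of_lt ‹i < j› (hf ‹f i = f j›)
    on_goal 1 =>
      apply ne_of_lt _ q₁
      have : (ab' i).1 ∈ image card (inc_sequences_ending_in i) := by exact max'_mem _ (Nonempty.image ⟨{i}, inc_i i⟩ _)
    on_goal 2 =>
      apply ne_of_lt _ q₂
      have : (ab' i).2 ∈ image card (dec_sequences_ending_in i) := by exact max'_mem _ (Nonempty.image ⟨{i}, dec_i i⟩ _)
    all_goals
      rw [Nat.lt_iff_add_one_le]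
      apply le_max'
      rw [mem_image] at this ⊢
      rcases this with ⟨t, ht₁, ht₂⟩
      rw [mem_filter] at ht₁
      have : t.max = i := by simp only [ht₁.2.1]
      refine ⟨insert j t, ?_, ?_⟩
      · rw [mem_filter]
        refine ⟨?_, ?_, ?_⟩
        · rw [mem_powerset]; apply subset_univ
        · convert max_insert (a := j) (s := t)
          rw [ht₁.2.1, max_eq_left]
          apply WithBot.coe_le_coe.mpr (le_of_lt ‹i < j›)
        simp only [StrictMonoOn, StrictAntiOn, coe_insert, Set.mem_insert_iff, mem_coe]
        rintro x ⟨rfl | _⟩ y ⟨rfl | _⟩ _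
        · apply (irrefl _ ‹j < j›).elim
        · exfalso
          apply not_le_of_gt (_root_.trans ‹i < j› ‹j < y›) (le_max_of_eq ‹y ∈ t› ‹t.max = i›)
        · first
          | apply lt_of_le_of_lt _ ‹f i < f j›
          | apply lt_of_lt_of_le ‹f j < f i› _
          rcases lt_or_eq_of_le (le_max_of_eq ‹x ∈ t› ‹t.max = i›) with (_ | rfl)
          · apply le_of_lt (ht₁.2.2 ‹x ∈ t› (mem_of_max ‹t.max = i›) ‹x < i›)
          · rfl
        · apply ht₁.2.2 ‹x ∈ t› ‹y ∈ t› ‹x < y›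
      · rw [card_insert_of_notMem, ht₂]
        intro
        apply not_le_of_gt ‹i < j› (le_max_of_eq ‹j ∈ t› ‹t.max = i›)
  by_contra! q
  let ran : Finset (ℕ × ℕ) := (range r).image Nat.succ ×ˢ (range s).image Nat.succ
  have : image ab univ ⊆ ran := by
    rintro ⟨x₁, x₂⟩
    simp only [ran, mem_image, exists_prop, mem_range, mem_univ, mem_product, true_and,
      Prod.ext_iff]
    rintro ⟨i, rfl, rfl⟩
    specialize q i
    have z : 1 ≤ (ab i).1 ∧ 1 ≤ (ab i).2 := by
      simp only [← hab]
      constructor <;>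
        · apply le_max'
          rw [mem_image]
          exact ⟨{i}, by solve_by_elim, card_singleton i⟩
    exact ⟨⟨(ab i).1 - 1, by omega⟩, (ab i).2 - 1, by omega⟩
  apply not_le_of_gt hn
  simpa [ran, Nat.succ_injective, card_image_of_injective, ‹Injective ab›] using card_le_card this

open Function Finset in
theorem exists_mono_subset (a m : ℕ) :
    ∃ N : ℕ, m ≤ N ∧ ∀ n : ℕ, N ≤ n → ∀ A : Finset (Equiv.Perm (Fin n)), A.card ≤ a →
      ∃ S : Finset (Fin n), m ≤ S.card ∧
        ∀ σ ∈ A, StrictMonoOn (⇑σ) ↑S ∨ StrictAntiOn (⇑σ) ↑S := by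
  induction a generalizing m with
  | zero =>
    refine ⟨m, le_rfl, fun n hn A hA => ?_⟩
    obtain ⟨S, _, hScard⟩ := Finset.exists_subset_card_eq
      (show m ≤ (Finset.univ : Finset (Fin n)).card by simpa using hn)
    refine ⟨S, hScard.ge, fun σ hσ => ?_⟩
    rw [Finset.card_eq_zero.mp (Nat.le_zero.mp hA)] at hσ
    simp at hσ
  | succ a ih =>
    obtain ⟨N, hNm', hN⟩ := ih ((m - 1) * (m - 1) + 1)
    have hmle : m ≤ (m - 1) * (m - 1) + 1 := by
      rcases m with _ | k
      · omega
      · rcases k with _ | l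
        · omega
        · simp only [Nat.succ_sub_one]
          nlinarith
    refine ⟨N, le_trans hmle hNm', fun n hn A hA => ?_⟩
    rcases A.eq_empty_or_nonempty with rfl | ⟨σ0, hσ0⟩
    · obtain ⟨S, _, hScard⟩ := Finset.exists_subset_card_eq
        (show m ≤ (Finset.univ : Finset (Fin n)).card by
          simpa using le_trans (le_trans hmle hNm') hn)
      exact ⟨S, hScard.ge, fun σ hσ => by simp at hσ⟩
    obtain ⟨S', hS'card, hS'⟩ := hN n hn (A.erase σ0)
      (by have := Finset.card_erase_of_mem hσ0; omega)
    set c := S'.card with hc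
    let e : Fin c ≃o {x // x ∈ S'} := S'.orderIsoOfFin rfl
    have hemono : StrictMono fun i : Fin c => ((e i : Fin n)) := fun i j hij => by
      exact_mod_cast (e.lt_iff_lt.mpr hij)
    have hf : Injective fun i : Fin c => σ0 ((e i : Fin n)) := by
      intro i j hij
      exact hemono.injective (σ0.injective hij)
    have hrs : (m - 1) * (m - 1) < c := by omega
    have key := my_erdos_szekeres (r := m - 1) (s := m - 1) hrs hf
    obtain ⟨t, htcard, htm⟩ | ⟨t, htcard, htm⟩ := key
    all_goals {
      refine ⟨t.image (fun i => (e i : Fin n)), ?_, ?_⟩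
      · rw [Finset.card_image_of_injective _ hemono.injective]; omega
      · intro σ hσ
        by_cases hσσ0 : σ = σ0
        · subst hσσ0
          first
          | · left
              intro x hx y hy hxy
              simp only [coe_image, Set.mem_image, mem_coe] at hx hy
              obtain ⟨i, hi, rfl⟩ := hx
              obtain ⟨j, hj, rfl⟩ := hy
              exact htm hi hj (hemono.lt_iff_lt.mp hxy)
          | · right
              intro x hx y hy hxy
              simp only [coe_image, Set.mem_image, mem_coe] at hx hy
              obtain ⟨i, hi, rfl⟩ := hx
              obtain ⟨j, hj, rfl⟩ := hy
              exact htm hi hj (hemono.lt_iff_lt.mp hxy)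
        · have hsub : ↑(t.image fun i => (e i : Fin n)) ⊆ (↑S' : Set (Fin n)) := by
            intro x hx
            simp only [coe_image, Set.mem_image, mem_coe] at hx
            obtain ⟨i, _, rfl⟩ := hx
            exact (e i).2
          rcases hS' σ (Finset.mem_erase.mpr ⟨hσσ0, hσ⟩) with h | h
          · exact Or.inl (h.mono hsub)
          · exact Or.inr (h.mono hsub)
    }

theorem p_tuple_dependency_large (a b p : ℕ) (ha : 0 < a) (hb : 0 < b) (hp : 2 ≤ p) :
    ∃ n : ℕ, p ≤ n ∧
      ∀ A : Finset (Equiv.Perm (Fin n)), A.card ≤ a → b - 1 ≤ tupleDep A p := by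
  obtain ⟨N, hNm, hN⟩ := exists_mono_subset a (b - 1 + p)
  refine ⟨max N p, le_max_right _ _, fun A hA => ?_⟩
  obtain ⟨S, hScard, hS⟩ := hN _ (le_max_left _ _) A hA
  have hSne : S.Nonempty := Finset.card_pos.mp (by omega)
  set smin := S.min' hSne with hsmin
  set smax := S.max' hSne with hsmax
  have hpair : ({smin, smax} : Finset (Fin (max N p))) ⊆ S := by
    intro x hx
    rcases Finset.mem_insert.mp hx with rfl | hx
    · exact S.min'_mem hSne
    · rw [Finset.mem_singleton.mp hx]; exact S.max'_mem hSne
  have hsn : ({smin, smax} : Finset (Fin (max N p))).card ≤ p :=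
    le_trans (Finset.card_insert_le _ _) (by simp; omega)
  have hnt : p ≤ S.card := by omega
  obtain ⟨P, hPsub, hPS, hPcard⟩ := Finset.exists_subsuperset_card_eq hpair hsn hnt
  -- S ⊆ depSet A P
  have hSdep : S ⊆ depSet A P := by
    intro s hs
    rw [depSet, Finset.mem_filter]
    refine ⟨Finset.mem_univ _, fun σ hσ => ?_⟩
    rcases hS σ hσ with h | h
    · refine ⟨smax, hPsub (by simp), ?_⟩
      rcases eq_or_lt_of_le (S.le_max' s hs) with heq | hlt
      · rw [heq]
      · exact le_of_lt (h hs (S.max'_mem hSne) hlt)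
    · refine ⟨smin, hPsub (by simp), ?_⟩
      rcases eq_or_lt_of_le (S.min'_le s hs) with heq | hlt
      · rw [← heq]
      · exact le_of_lt (h (S.min'_mem hSne) hs hlt)
  have hdep : b - 1 ≤ dep A P := by
    have := Finset.card_le_card hSdep
    rw [dep, hPcard]
    omega
  refine le_trans hdep (Finset.le_sup ?_)
  rw [Finset.mem_powersetCard]
  exact ⟨Finset.subset_univ _, hPcard⟩
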